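/- arXiv:2306.09757 — 3 statements merged into one kernel-verified Lean document; each statement's English description precedes it below -/
import Mathlib

section
/- Let A_1, …, A_N be real n×n matrices and consider the linear switched system with vector fields f_i(x) = A_i x. Suppose B ⊆ ℝⁿ is a compact absorbing set for the switched system with the origin in the interior of B. Then the origin is stable under arbitrary switching: for every ε > 0 there exists δ > 0 such that every solution x of the switched system with ‖x(0)‖₂ < δ satisfies ‖x(t)‖₂ < ε for all t ≥ 0. -/
/-- A solution of the linear switched system determined by the matrices `A i`:
a function differentiable on `[0,∞)` whose derivative at each `t ≥ 0` is `A i (x t)`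
for some index `i` (arbitrary switching). -/
def IsSwitchedSolution {n N : ℕ} (A : Fin N → Matrix (Fin n) (Fin n) ℝ)
    (x : ℝ → EuclideanSpace ℝ (Fin n)) : Prop :=
  ∀ t : ℝ, 0 ≤ t → ∃ i : Fin N,
    HasDerivWithinAt x (WithLp.toLp 2 ((A i).mulVec (x t))) (Set.Ici 0) t

/-- `M` is positively invariant for the linear switched system. -/
def PositivelyInvariant {n N : ℕ} (A : Fin N → Matrix (Fin n) (Fin n) ℝ)
    (M : Set (EuclideanSpace ℝ (Fin n))) : Prop :=
  ∀ x : ℝ → EuclideanSpace ℝ (Fin n), IsSwitchedSolution A x →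
    x 0 ∈ M → ∀ t : ℝ, 0 ≤ t → x t ∈ M

/-- `M` is an absorbing set for the linear switched system. -/
def AbsorbingSet {n N : ℕ} (A : Fin N → Matrix (Fin n) (Fin n) ℝ)
    (M : Set (EuclideanSpace ℝ (Fin n))) : Prop :=
  PositivelyInvariant A M ∧
    ∀ C : Set (EuclideanSpace ℝ (Fin n)), IsCompact C →
      ∃ tC : ℝ, 0 ≤ tC ∧
        ∀ x : ℝ → EuclideanSpace ℝ (Fin n), IsSwitchedSolution A x →
          x 0 ∈ C → ∀ t : ℝ, tC ≤ t → x t ∈ M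

/-- If a linear switched system has a compact absorbing set `B` with `0` in its
interior, then the origin is stable under arbitrary switching. -/
theorem origin_stable_of_absorbing {n N : ℕ} (A : Fin N → Matrix (Fin n) (Fin n) ℝ)
    (B : Set (EuclideanSpace ℝ (Fin n))) (hB : IsCompact B)
    (h0 : (0 : EuclideanSpace ℝ (Fin n)) ∈ interior B)
    (habs : AbsorbingSet A B) :
    ∀ ε : ℝ, 0 < ε → ∃ δ : ℝ, 0 < δ ∧
      ∀ x : ℝ → EuclideanSpace ℝ (Fin n), IsSwitchedSolution A x →
        ‖x 0‖ < δ → ∀ t : ℝ, 0 ≤ t → ‖x t‖ < ε := by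
  obtain ⟨hinv, -⟩ := habs
  obtain ⟨r, hr, hball⟩ := Metric.mem_nhds_iff.mp (mem_interior_iff_mem_nhds.mp h0)
  obtain ⟨R0, hR0⟩ := hB.isBounded.subset_closedBall 0
  set R := max R0 1 with hRdef
  have hRpos : (0 : ℝ) < R := lt_of_lt_of_le one_pos (le_max_right _ _)
  have hBR : B ⊆ Metric.closedBall 0 R :=
    hR0.trans (Metric.closedBall_subset_closedBall (le_max_left _ _))
  intro ε hε
  refine ⟨r * ε / (2 * R), by positivity, ?_⟩
  intro x hx hx0 t ht
  set c : ℝ := (2 * R) / ε with hc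
  have hcpos : 0 < c := by positivity
  set y : ℝ → EuclideanSpace ℝ (Fin n) := fun s => c • x s with hy
  have hys : IsSwitchedSolution A y := by
    intro s hs
    obtain ⟨i, hd⟩ := hx s hs
    refine ⟨i, ?_⟩
    have h2 := hd.const_smul c
    have heq : (A i).mulVec (y s) = c • (A i).mulVec (x s) := by
      show (A i).mulVec (c • x s) = _
      funext j
      simp [Matrix.mulVec, dotProduct, Finset.mul_sum, Finset.sum_mul]
      congr 1; funext k; ring
    rw [heq]
    exact h2
  have hy0 : y 0 ∈ B := by
    apply hball
    simp only [Metric.mem_ball, dist_zero_right]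
    have hn : ‖y 0‖ = c * ‖x 0‖ := by
      simp [hy, norm_smul, abs_of_pos hcpos]
    rw [hn]
    calc c * ‖x 0‖ < c * (r * ε / (2 * R)) := by
          exact mul_lt_mul_of_pos_left hx0 hcpos
      _ = r := by rw [hc]; field_simp
  have hyt : y t ∈ B := hinv y hys hy0 t ht
  have hytR : ‖y t‖ ≤ R := by
    have := hBR hyt
    simpa [Metric.mem_closedBall, dist_zero_right] using this
  have hxt : ‖x t‖ = ‖y t‖ / c := by
    have : ‖y t‖ = c * ‖x t‖ := by simp [hy, norm_smul, abs_of_pos hcpos]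
    rw [this]; field_simp
  rw [hxt]
  have h2 : ‖y t‖ / c ≤ R / c := by gcongr
  have h3 : R / c = ε / 2 := by rw [hc]; field_simp
  rw [h3] at h2
  linarith
end

section
/- Let A_1, …, A_N be real n×n matrices and consider the linear switched system with vector fields f_i(x) = A_i x. Suppose B ⊆ ℝⁿ is a compact absorbing set for the switched system. Then every solution of the switched system converges to the origin: for every solution x, x(t) → 0 as t → ∞. -/
lemma smul_switchedSolution {n N : ℕ} (A : Fin N → Matrix (Fin n) (Fin n) ℝ) (c : ℝ)
    {x : ℝ → EuclideanSpace ℝ (Fin n)} (hx : IsSwitchedSolution A x) :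
    IsSwitchedSolution A (fun t => c • x t) := by
  intro t ht
  obtain ⟨i, hi⟩ := hx t ht
  refine ⟨i, ?_⟩
  have h2 := hi.const_smul c
  convert h2 using 1
  show WithLp.toLp 2 ((A i).mulVec (c • x t).ofLp) = c • WithLp.toLp 2 ((A i).mulVec (x t).ofLp)
  rw [WithLp.ofLp_smul, Matrix.mulVec_smul, WithLp.toLp_smul]
  all_goals rfl

/-- If a linear switched system has a compact absorbing set, then every solution
converges to the origin. -/
theorem solutions_tendsto_zero_of_absorbing {n N : ℕ}
    (A : Fin N → Matrix (Fin n) (Fin n) ℝ)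
    (B : Set (EuclideanSpace ℝ (Fin n))) (hB : IsCompact B)
    (habs : AbsorbingSet A B) :
    ∀ x : ℝ → EuclideanSpace ℝ (Fin n), IsSwitchedSolution A x →
      Filter.Tendsto x Filter.atTop (nhds 0) := by
  intro x hx
  obtain ⟨R, hR⟩ := (hB.isBounded).subset_closedBall 0
  rw [NormedAddCommGroup.tendsto_nhds_zero]
  intro ε hε
  set c : ℝ := (max R 0 + 1) / ε with hc
  have hc0 : 0 < c := div_pos (by positivity) hε
  obtain ⟨tC, htC0, htC⟩ := habs.2 {c • x 0} isCompact_singleton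
  rw [Filter.eventually_atTop]
  refine ⟨tC, fun t ht => ?_⟩
  have hmem : c • x t ∈ B := htC (fun s => c • x s) (smul_switchedSolution A c hx) rfl t ht
  have hnorm : ‖c • x t‖ ≤ R := by
    have := hR hmem
    simpa [Metric.mem_closedBall] using this
  have : c * ‖x t‖ ≤ R := by
    rw [norm_smul, Real.norm_eq_abs, abs_of_pos hc0] at hnorm
    exact hnorm
  have hlt : ‖x t‖ ≤ R / c := (le_div_iff₀' hc0).2 this
  calc ‖x t‖ ≤ R / c := hlt
    _ ≤ (max R 0) / c := by gcongr; exact le_max_left R 0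
    _ < ε := by
        rw [hc, div_div_eq_mul_div, div_lt_iff₀ (by positivity)]
        nlinarith [le_max_right R 0]
end

section
/- (Theorem 4) Let A_1, …, A_N be real n×n matrices and consider the linear switched system with vector fields f_i(x) = A_i x. Suppose B ⊆ ℝⁿ is a compact absorbing set for the switched system with the origin in the interior of B. Then the origin is globally asymptotically stable under arbitrary switching: (i) for every ε > 0 there exists δ > 0 such that every solution x with ‖x(0)‖₂ < δ satisfies ‖x(t)‖₂ < ε for all t ≥ 0, and (ii) every solution x satisfies x(t) → 0 as t → ∞. -/
lemma smul_isSwitchedSolution {n N : ℕ} (A : Fin N → Matrix (Fin n) (Fin n) ℝ)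
    {x : ℝ → EuclideanSpace ℝ (Fin n)} (hx : IsSwitchedSolution A x) (c : ℝ) :
    IsSwitchedSolution A (fun t => c • x t) := by
  intro t ht
  obtain ⟨i, h⟩ := hx t ht
  refine ⟨i, ?_⟩
  have := h.const_smul c
  show HasDerivWithinAt (fun t => c • x t) (WithLp.toLp 2 ((A i).mulVec (c • x t).ofLp)) (Set.Ici 0) t
  rw [show WithLp.toLp 2 ((A i).mulVec (c • x t).ofLp) = c • WithLp.toLp 2 ((A i).mulVec (x t).ofLp) by
    ext j; simp [Matrix.mulVec_smul]]
  exact this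

/-- Theorem 4: if a linear switched system has a compact absorbing set `B` with `0` in
its interior, then the origin is globally asymptotically stable under arbitrary
switching: (i) it is stable, and (ii) every solution converges to the origin. -/
theorem origin_globally_asymptotically_stable_of_absorbing {n N : ℕ}
    (A : Fin N → Matrix (Fin n) (Fin n) ℝ)
    (B : Set (EuclideanSpace ℝ (Fin n))) (hB : IsCompact B)
    (h0 : (0 : EuclideanSpace ℝ (Fin n)) ∈ interior B)
    (habs : AbsorbingSet A B) :
    (∀ ε : ℝ, 0 < ε → ∃ δ : ℝ, 0 < δ ∧
      ∀ x : ℝ → EuclideanSpace ℝ (Fin n), IsSwitchedSolution A x →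
        ‖x 0‖ < δ → ∀ t : ℝ, 0 ≤ t → ‖x t‖ < ε) ∧
    (∀ x : ℝ → EuclideanSpace ℝ (Fin n), IsSwitchedSolution A x →
      Filter.Tendsto x Filter.atTop (nhds 0)) := by
  obtain ⟨hinv, hab⟩ := habs
  obtain ⟨R0, hR0⟩ := hB.isBounded.subset_closedBall 0
  set R : ℝ := max R0 1 with hRdef
  have hRpos : 0 < R := lt_of_lt_of_le one_pos (le_max_right _ _)
  have hBR : B ⊆ Metric.closedBall 0 R :=
    hR0.trans (Metric.closedBall_subset_closedBall (le_max_left _ _))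
  obtain ⟨δ0, hδ0pos, hδ0⟩ := Metric.mem_nhds_iff.mp (mem_interior_iff_mem_nhds.mp h0)
  constructor
  · intro ε hε
    refine ⟨ε * δ0 / (2 * R), by positivity, ?_⟩
    intro x hx hx0 t ht
    set c : ℝ := 2 * R / ε with hc
    have hcpos : 0 < c := by positivity
    have hy := smul_isSwitchedSolution A hx c
    have hy0 : (fun t => c • x t) 0 ∈ B := by
      apply hδ0
      simp only [Metric.mem_ball, dist_zero_right, norm_smul, Real.norm_eq_abs,
        abs_of_pos hcpos]
      calc c * ‖x 0‖ < c * (ε * δ0 / (2 * R)) := by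
            exact mul_lt_mul_of_pos_left hx0 hcpos
        _ = δ0 := by field_simp [hc]; rw [hc, div_mul_cancel₀ _ hε.ne']
    have hyt := hinv _ hy hy0 t ht
    have hnorm : ‖c • x t‖ ≤ R := by
      simpa [dist_zero_right] using hBR hyt
    rw [norm_smul, Real.norm_eq_abs, abs_of_pos hcpos] at hnorm
    have : ‖x t‖ ≤ ε / 2 := by
      rw [hc, div_mul_eq_mul_div, div_le_iff₀ hε] at hnorm
      nlinarith [hRpos]
    linarith [hε]
  · intro x hx
    rw [tendsto_zero_iff_norm_tendsto_zero]
    rw [Metric.tendsto_atTop]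
    intro ε hε
    set c : ℝ := 2 * R / ε with hc
    have hcpos : 0 < c := by positivity
    have hy := smul_isSwitchedSolution A hx c
    obtain ⟨tC, htC0, htC⟩ := hab {(fun t => c • x t) 0} isCompact_singleton
    refine ⟨tC, ?_⟩
    intro t ht
    have hyt := htC _ hy rfl t ht
    have hnorm : ‖c • x t‖ ≤ R := by
      simpa [dist_zero_right] using hBR hyt
    rw [norm_smul, Real.norm_eq_abs, abs_of_pos hcpos] at hnorm
    have hle : ‖x t‖ ≤ ε / 2 := by
      rw [hc, div_mul_eq_mul_div, div_le_iff₀ hε] at hnorm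
      nlinarith [hRpos]
    rw [Real.dist_eq]
    have : |‖x t‖ - 0| = ‖x t‖ := by simp [abs_of_nonneg (norm_nonneg _)]
    rw [this]
    linarith
end
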